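/- (Gentle measurement / tender operator lemma.) Let ρ be a density operator and 0 ≤ Π ≤ 𝟙 an operator with Tr(ρΠ) ≥ 1 − ε for some ε ∈ [0,1]. Then ‖ρ − ΠρΠ‖_1 ≤ √(8ε) (and hence also ‖ρ − ΠρΠ/Tr(ΠρΠ)‖_1 ≤ √(8ε) + 2ε). -/

import Mathlib

open Matrix
open scoped ComplexOrder

/-- The positive semidefinite square root (Mathlib's former `Matrix.PosSemidef.sqrt`). -/
noncomputable def Matrix.PosSemidef.sqrt {n : Type*} {𝕜 : Type*} [Fintype n] [DecidableEq n]
    [RCLike 𝕜] {A : Matrix n n 𝕜} (hA : A.PosSemidef) : Matrix n n 𝕜 :=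
  hA.1.eigenvectorUnitary.1 * diagonal ((↑) ∘ (√·) ∘ hA.1.eigenvalues) *
    (star hA.1.eigenvectorUnitary : Matrix n n 𝕜)

/-- Trace norm `‖A‖₁ = Tr √(AᴴA)`. -/
noncomputable def traceNorm {n : Type*} [Fintype n] [DecidableEq n] (A : Matrix n n ℂ) : ℝ :=
  ((Matrix.posSemidef_conjTranspose_mul_self A).sqrt.trace).re

section sqrtaux
open scoped MatrixOrder
variable {n : Type*} [Fintype n] [DecidableEq n]

lemma Matrix.PosSemidef.sqrt_eq_cfcSqrt {A : Matrix n n ℂ} (hA : A.PosSemidef) :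
    hA.sqrt = CFC.sqrt A := by
  rw [CFC.sqrt_eq_cfc, cfc_nnreal_eq_real _ A hA.nonneg, hA.1.cfc_eq, IsHermitian.cfc,
    Unitary.conjStarAlgAut_apply, Matrix.PosSemidef.sqrt]
  congr 3
  funext i
  simp [hA.eigenvalues_nonneg i]

lemma Matrix.PosSemidef.posSemidef_sqrt {A : Matrix n n ℂ} (hA : A.PosSemidef) :
    hA.sqrt.PosSemidef := by
  rw [hA.sqrt_eq_cfcSqrt]; exact Matrix.nonneg_iff_posSemidef.mp (CFC.sqrt_nonneg A)

lemma Matrix.PosSemidef.sqrt_mul_self {A : Matrix n n ℂ} (hA : A.PosSemidef) :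
    hA.sqrt * hA.sqrt = A := by
  rw [hA.sqrt_eq_cfcSqrt]; exact CFC.sqrt_mul_sqrt_self A hA.nonneg

lemma Matrix.PosSemidef.sq_sqrt {A : Matrix n n ℂ} (hA : A.PosSemidef) :
    hA.sqrt ^ 2 = A := by
  rw [pow_two, hA.sqrt_mul_self]

lemma Matrix.PosSemidef.eq_sqrt_of_sq_eq {A B : Matrix n n ℂ} (hA : A.PosSemidef)
    (hB : B.PosSemidef) (h : A ^ 2 = B) : A = hB.sqrt := by
  rw [hB.sqrt_eq_cfcSqrt, eq_comm, CFC.sqrt_eq_iff B A hB.nonneg hA.nonneg, ← pow_two, h]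

end sqrtaux

attribute [irreducible] Matrix.PosSemidef.sqrt


section aux
variable {n : Type*} [Fintype n] [DecidableEq n]

/-- diagonal entries of a PSD matrix are nonnegative -/
lemma psd_diag_nonneg {M : Matrix n n ℂ} (hM : M.PosSemidef) (i : n) : 0 ≤ M i i := by
  exact hM.diag_nonneg

lemma psd_trace_nonneg {M : Matrix n n ℂ} (hM : M.PosSemidef) : 0 ≤ M.trace := by
  rw [Matrix.trace]
  exact Finset.sum_nonneg fun i _ => psd_diag_nonneg hM i

end aux

section tn
variable {n : Type*} [Fintype n] [DecidableEq n]

lemma tn_eq_sum (A : Matrix n n ℂ) :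
    traceNorm A = ∑ j, Real.sqrt ((Matrix.posSemidef_conjTranspose_mul_self A).1.eigenvalues j) := by
  rw [traceNorm, Matrix.PosSemidef.sqrt]
  set h := (Matrix.posSemidef_conjTranspose_mul_self A).1
  rw [Matrix.trace_mul_cycle]
  rw [Unitary.coe_star_mul_self, Matrix.one_mul, Matrix.trace_diagonal]
  simp [Complex.ofReal_re]

lemma entry_sum_sq (X : Matrix n n ℂ) (j : n) :
    (Xᴴ * X) j j = ((∑ i, ‖X i j‖ ^ 2 : ℝ) : ℂ) := by
  rw [Matrix.mul_apply]
  push_cast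
  congr 1
  ext i
  rw [Matrix.conjTranspose_apply]
  rw [Complex.star_def, mul_comm, Complex.mul_conj']

lemma re_trace_mul_le (A C : Matrix n n ℂ)
    (hC : ((1 : Matrix n n ℂ) - C * Cᴴ).PosSemidef) :
    ((C * A).trace).re ≤ traceNorm A := by
  have hH := Matrix.posSemidef_conjTranspose_mul_self A
  set h1 : (Aᴴ * A).IsHermitian := hH.1 with hh1
  set W : Matrix n n ℂ := (h1.eigenvectorUnitary : Matrix n n ℂ) with hW
  set d : n → ℝ := h1.eigenvalues with hd
  have hWsW : star W * W = 1 := Unitary.coe_star_mul_self h1.eigenvectorUnitary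
  have hWWs : W * star W = 1 := Unitary.coe_mul_star_self h1.eigenvectorUnitary
  set G : Matrix n n ℂ := Cᴴ * W with hG
  set B : Matrix n n ℂ := A * W with hB
  -- column norms of B
  have hBcol : ∀ j, (∑ i, ‖B i j‖ ^ 2 : ℝ) = d j := by
    intro j
    have h2 : Bᴴ * B = Matrix.diagonal (RCLike.ofReal ∘ d) := by
      rw [hB, Matrix.conjTranspose_mul]
      calc Wᴴ * Aᴴ * (A * W) = star W * (Aᴴ * A) * W := by
            rw [Matrix.star_eq_conjTranspose]; noncomm_ring
        _ = _ := by
            have := h1.conjStarAlgAut_star_eigenvectorUnitary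
            rwa [Unitary.conjStarAlgAut_apply, Unitary.coe_star, star_star] at this
    have := entry_sum_sq B j
    rw [h2] at this
    have : ((d j : ℝ) : ℂ) = ((∑ i, ‖B i j‖ ^ 2 : ℝ) : ℂ) := by
      rw [← this]; simp [Matrix.diagonal_apply_eq]
    exact_mod_cast this.symm
  -- column norms of G
  have hGcol : ∀ j, (∑ i, ‖G i j‖ ^ 2 : ℝ) ≤ 1 := by
    intro j
    have hpsd := hC.conjTranspose_mul_mul_same W
    have hdiag := psd_diag_nonneg hpsd j
    have hexp : Wᴴ * ((1 : Matrix n n ℂ) - C * Cᴴ) * W = 1 - Gᴴ * G := by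
      rw [hG, Matrix.conjTranspose_mul, Matrix.conjTranspose_conjTranspose]
      have : (Wᴴ : Matrix n n ℂ) = star W := rfl
      rw [this]
      calc star W * ((1 : Matrix n n ℂ) - C * Cᴴ) * W
          = star W * W - star W * C * (Cᴴ * W) := by noncomm_ring
        _ = 1 - star W * C * (Cᴴ * W) := by rw [hWsW]
    rw [hexp] at hdiag
    have h3 : ((1 : Matrix n n ℂ) - Gᴴ * G) j j
        = 1 - ((∑ i, ‖G i j‖ ^ 2 : ℝ) : ℂ) := by
      rw [Matrix.sub_apply, entry_sum_sq G j, Matrix.one_apply_eq]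
    rw [h3] at hdiag
    have h4 := (Complex.le_def.mp hdiag).1
    rw [Complex.zero_re, Complex.sub_re, Complex.one_re, Complex.ofReal_re] at h4
    linarith
  -- trace rewriting
  have htr : (C * A).trace = ((star W * C) * B).trace := by
    calc (C * A).trace = ((C * A) * (W * star W)).trace := by rw [hWWs, Matrix.mul_one]
      _ = ((C * A) * W * star W).trace := by congr 1; noncomm_ring
      _ = (star W * ((C * A) * W)).trace := by rw [Matrix.trace_mul_comm]
      _ = ((star W * C) * B).trace := by rw [hB]; noncomm_ring
  rw [htr, tn_eq_sum]
  rw [Matrix.trace]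
  rw [Complex.re_sum]
  have hstep : ∀ j, (((star W * C) * B).diag j).re ≤ Real.sqrt (d j) := by
    intro j
    have hentry : ((star W * C) * B).diag j = ∑ i, star (G i j) * B i j := by
      rw [Matrix.diag_apply, Matrix.mul_apply]
      congr 1; ext i
      congr 1
      have : star W * C = Gᴴ := by
        rw [hG, Matrix.conjTranspose_mul, Matrix.conjTranspose_conjTranspose]; rfl
      rw [this, Matrix.conjTranspose_apply]
    rw [hentry, Complex.re_sum]
    calc ∑ i, (star (G i j) * B i j).re
        ≤ ∑ i, ‖G i j‖ * ‖B i j‖ := by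
          apply Finset.sum_le_sum
          intro i _
          calc (star (G i j) * B i j).re ≤ ‖star (G i j) * B i j‖ := Complex.re_le_norm _
            _ = ‖G i j‖ * ‖B i j‖ := by rw [norm_mul, norm_star]
      _ ≤ Real.sqrt (∑ i, ‖G i j‖ ^ 2) * Real.sqrt (∑ i, ‖B i j‖ ^ 2) :=
          Real.sum_mul_le_sqrt_mul_sqrt _ _ _
      _ ≤ 1 * Real.sqrt (d j) := by
          rw [hBcol j]
          apply mul_le_mul_of_nonneg_right _ (Real.sqrt_nonneg _)
          rw [show (1:ℝ) = Real.sqrt 1 by simp]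
          exact Real.sqrt_le_sqrt (by simpa using hGcol j)
      _ = Real.sqrt (d j) := one_mul _
  exact Finset.sum_le_sum fun j _ => hstep j

lemma contraction_of_proj {M : Matrix n n ℂ} (h1 : Mᴴ = M) (h2 : M * M = M) :
    ((1 : Matrix n n ℂ) - M).PosSemidef := by
  have key : ((1 : Matrix n n ℂ) - M)ᴴ * ((1 : Matrix n n ℂ) - M) = 1 - M := by
    rw [Matrix.conjTranspose_sub, Matrix.conjTranspose_one, h1, Matrix.sub_mul,
      Matrix.one_mul, Matrix.mul_sub, Matrix.mul_one, h2]
    abel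
  exact key ▸ Matrix.posSemidef_conjTranspose_mul_self _

lemma inv_sqrt_mul_self {x : ℝ} (hx : 0 ≤ x) : (Real.sqrt x)⁻¹ * x = Real.sqrt x := by
  rcases eq_or_lt_of_le hx with h | h
  · simp [← h]
  · have hs : Real.sqrt x ≠ 0 := ne_of_gt (Real.sqrt_pos.mpr h)
    field_simp
    exact (Real.sq_sqrt hx).symm

/-- scalar helper: `s = (√x)⁻¹` satisfies `s*x*s ∈ {0,1}` facts -/
lemma sds_mul_self {x : ℝ} (hx : 0 ≤ x) :
    ((Real.sqrt x)⁻¹ * x * (Real.sqrt x)⁻¹) * ((Real.sqrt x)⁻¹ * x * (Real.sqrt x)⁻¹)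
      = (Real.sqrt x)⁻¹ * x * (Real.sqrt x)⁻¹ := by
  rcases eq_or_lt_of_le hx with h | h
  · simp [← h]
  · have hne : Real.sqrt x ≠ 0 := ne_of_gt (Real.sqrt_pos.mpr h)
    have hxx : Real.sqrt x * Real.sqrt x = x := Real.mul_self_sqrt hx
    field_simp
    exact (Real.sq_sqrt hx).symm

lemma ss_d_ss {x : ℝ} (hx : 0 ≤ x) :
    ((Real.sqrt x)⁻¹ * (Real.sqrt x)⁻¹) * x * ((Real.sqrt x)⁻¹ * (Real.sqrt x)⁻¹)
      = (Real.sqrt x)⁻¹ * (Real.sqrt x)⁻¹ := by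
  rcases eq_or_lt_of_le hx with h | h
  · simp [← h]
  · have hne : Real.sqrt x ≠ 0 := ne_of_gt (Real.sqrt_pos.mpr h)
    have hxx : Real.sqrt x * Real.sqrt x = x := Real.mul_self_sqrt hx
    field_simp
    exact (Real.sq_sqrt hx).symm

/-- `P f = W * diagonal f * Wᴴ` for a real vector `f`. -/
noncomputable def Pdiag (W : Matrix n n ℂ) (f : n → ℝ) : Matrix n n ℂ :=
  W * Matrix.diagonal (fun j => (f j : ℂ)) * star W

lemma Pdiag_herm (W : Matrix n n ℂ) (f : n → ℝ) : (Pdiag W f)ᴴ = Pdiag W f := by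
  rw [Pdiag, Matrix.conjTranspose_mul, Matrix.conjTranspose_mul,
    Matrix.diagonal_conjTranspose]
  have h1 : (star W : Matrix n n ℂ)ᴴ = W := by
    rw [Matrix.star_eq_conjTranspose, Matrix.conjTranspose_conjTranspose]
  have h2 : (W : Matrix n n ℂ)ᴴ = star W := rfl
  have h3 : star (fun j => ((f j : ℝ) : ℂ)) = fun j => ((f j : ℝ) : ℂ) := by
    funext j; simp [Complex.star_def, Complex.conj_ofReal]
  rw [h1, h2, h3]
  all_goals noncomm_ring

section conjdiag
variable {W : Matrix n n ℂ} (hWsW : star W * W = 1)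

include hWsW in
lemma Pdiag_mul (f g : n → ℝ) :
    Pdiag W f * Pdiag W g = Pdiag W (fun j => f j * g j) := by
  rw [Pdiag, Pdiag, Pdiag]
  calc W * Matrix.diagonal (fun j => (f j : ℂ)) * star W *
        (W * Matrix.diagonal (fun j => (g j : ℂ)) * star W)
      = W * (Matrix.diagonal (fun j => (f j : ℂ)) * (star W * W) *
          Matrix.diagonal (fun j => (g j : ℂ))) * star W := by noncomm_ring
    _ = W * (Matrix.diagonal (fun j => (f j : ℂ)) *
          Matrix.diagonal (fun j => (g j : ℂ))) * star W := by
        rw [hWsW, Matrix.mul_one]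
    _ = _ := by
        rw [Matrix.diagonal_mul_diagonal]
        push_cast
        rfl

include hWsW in
lemma Pdiag_trace (f : n → ℝ) : (Pdiag W f).trace = ((∑ j, f j : ℝ) : ℂ) := by
  rw [Pdiag, Matrix.trace_mul_cycle, hWsW, Matrix.one_mul, Matrix.trace_diagonal]
  push_cast
  rfl

end conjdiag

lemma exists_opt_contraction (A : Matrix n n ℂ) :
    ∃ C : Matrix n n ℂ, ((1 : Matrix n n ℂ) - C * Cᴴ).PosSemidef ∧
      ((1 : Matrix n n ℂ) - Cᴴ * C).PosSemidef ∧ ((C * A).trace).re = traceNorm A := by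
  have hH := Matrix.posSemidef_conjTranspose_mul_self A
  set h1 : (Aᴴ * A).IsHermitian := hH.1 with hh1
  set W : Matrix n n ℂ := (h1.eigenvectorUnitary : Matrix n n ℂ) with hW
  set d : n → ℝ := h1.eigenvalues with hd
  have hdnn : ∀ j, 0 ≤ d j := fun j => hH.eigenvalues_nonneg j
  have hWsW : star W * W = 1 := Unitary.coe_star_mul_self h1.eigenvectorUnitary
  set s : n → ℝ := fun j => (Real.sqrt (d j))⁻¹ with hs
  have hsval : ∀ j, s j = (Real.sqrt (d j))⁻¹ := fun j => rfl
  have hspec : Aᴴ * A = Pdiag W d := h1.spectral_theorem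
  set C : Matrix n n ℂ := Pdiag W s * Aᴴ with hC
  have hCH : Cᴴ = A * Pdiag W s := by
    rw [hC, Matrix.conjTranspose_mul, Matrix.conjTranspose_conjTranspose, Pdiag_herm]
  refine ⟨C, ?_, ?_, ?_⟩
  · -- C * Cᴴ = Pdiag (s*d*s), a projection
    have key : C * Cᴴ = Pdiag W (fun j => s j * d j * s j) := by
      rw [hC, hCH]
      calc Pdiag W s * Aᴴ * (A * Pdiag W s) = Pdiag W s * (Aᴴ * A) * Pdiag W s := by
            noncomm_ring
        _ = Pdiag W s * Pdiag W d * Pdiag W s := by rw [hspec]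
        _ = _ := by
            rw [Pdiag_mul hWsW, Pdiag_mul hWsW]
    rw [key]
    apply contraction_of_proj (Pdiag_herm W _)
    rw [Pdiag_mul hWsW]
    exact congrArg (Pdiag W) (by funext j; exact sds_mul_self (hdnn j))
  · -- Cᴴ * C = A * Pdiag (s²) * Aᴴ, a projection
    have key : Cᴴ * C = A * Pdiag W (fun j => s j * s j) * Aᴴ := by
      rw [hC, hCH, ← Pdiag_mul hWsW]
      noncomm_ring
    rw [key]
    apply contraction_of_proj
    · rw [Matrix.conjTranspose_mul, Matrix.conjTranspose_mul,
        Matrix.conjTranspose_conjTranspose, Pdiag_herm, Matrix.mul_assoc]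
    · calc A * Pdiag W (fun j => s j * s j) * Aᴴ * (A * Pdiag W (fun j => s j * s j) * Aᴴ)
          = A * (Pdiag W (fun j => s j * s j) * (Aᴴ * A) *
              Pdiag W (fun j => s j * s j)) * Aᴴ := by noncomm_ring
        _ = A * (Pdiag W (fun j => s j * s j) * Pdiag W d *
              Pdiag W (fun j => s j * s j)) * Aᴴ := by rw [hspec]
        _ = A * Pdiag W (fun j => s j * s j) * Aᴴ := by
            rw [Pdiag_mul hWsW, Pdiag_mul hWsW]
            have hv : (fun j => (s j * s j) * d j * (s j * s j)) = fun j => s j * s j := by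
              funext j; exact ss_d_ss (hdnn j)
            rw [hv, Matrix.mul_assoc]
  · -- trace value
    have key : C * A = Pdiag W (fun j => s j * d j) := by
      calc C * A = Pdiag W s * (Aᴴ * A) := by rw [hC]; noncomm_ring
        _ = Pdiag W s * Pdiag W d := by rw [hspec]
        _ = _ := Pdiag_mul hWsW s d
    rw [key, Pdiag_trace hWsW, tn_eq_sum, Complex.ofReal_re]
    exact Finset.sum_congr rfl fun j _ => inv_sqrt_mul_self (hdnn j)

lemma tn_triangle (X Y : Matrix n n ℂ) :
    traceNorm (X + Y) ≤ traceNorm X + traceNorm Y := by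
  obtain ⟨C, hC1, hC2, hCeq⟩ := exists_opt_contraction (X + Y)
  have hX := re_trace_mul_le X C hC1
  have hY := re_trace_mul_le Y C hC1
  calc traceNorm (X + Y) = ((C * (X + Y)).trace).re := hCeq.symm
    _ = ((C * X).trace).re + ((C * Y).trace).re := by
        rw [Matrix.mul_add, Matrix.trace_add, Complex.add_re]
    _ ≤ _ := add_le_add hX hY

lemma tn_psd {M : Matrix n n ℂ} (hM : M.PosSemidef) : traceNorm M = M.trace.re := by
  have h2 : M ^ 2 = Mᴴ * M := by rw [pow_two, hM.1]
  have h3 := hM.eq_sqrt_of_sq_eq (Matrix.posSemidef_conjTranspose_mul_self M) h2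
  rw [traceNorm, ← h3]

lemma psd_real_smul {M : Matrix n n ℂ} (hM : M.PosSemidef) {r : ℝ} (hr : 0 ≤ r) :
    (((r : ℂ) • M)).PosSemidef := by
  constructor
  · have := hM.1
    rw [Matrix.IsHermitian, Matrix.conjTranspose_smul, this]
    congr 1
    simp [Complex.star_def, Complex.conj_ofReal]
  · exact (hM.smul (by exact_mod_cast Complex.zero_le_real.mpr hr)).2

lemma tn_real_smul (c : ℝ) (M : Matrix n n ℂ) :
    traceNorm ((c : ℂ) • M) = |c| * traceNorm M := by
  set P := (Matrix.posSemidef_conjTranspose_mul_self M).sqrt with hPdef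
  have hP : P.PosSemidef := (Matrix.posSemidef_conjTranspose_mul_self M).posSemidef_sqrt
  have habs : (((|c| : ℝ) : ℂ) • P).PosSemidef := psd_real_smul hP (abs_nonneg c)
  have h2 : (((|c| : ℝ) : ℂ) • P) ^ 2 = ((c : ℂ) • M)ᴴ * ((c : ℂ) • M) := by
    rw [Matrix.conjTranspose_smul, Matrix.smul_mul, Matrix.mul_smul, smul_smul]
    have hsq : P ^ 2 = Mᴴ * M := (Matrix.posSemidef_conjTranspose_mul_self M).sq_sqrt
    have hc : (((|c| : ℝ) : ℂ)) ^ 2 = star ((c : ℝ) : ℂ) * ((c : ℝ) : ℂ) := by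
      rw [Complex.star_def, Complex.conj_ofReal, ← Complex.ofReal_pow, sq_abs,
        Complex.ofReal_pow, pow_two]
    rw [smul_pow, hsq, hc]
  have h3 := habs.eq_sqrt_of_sq_eq
    (Matrix.posSemidef_conjTranspose_mul_self ((c : ℂ) • M)) h2
  rw [traceNorm, ← h3, Matrix.trace_smul, smul_eq_mul, Complex.mul_re]
  simp only [Complex.ofReal_re, Complex.ofReal_im, zero_mul, sub_zero]
  rfl

lemma trace_mul_psd_nonneg {M N : Matrix n n ℂ} (hM : M.PosSemidef) (hN : N.PosSemidef) :
    0 ≤ (M * N).trace := by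
  set S := hN.sqrt with hS
  have hSherm : Sᴴ = S := hN.posSemidef_sqrt.1
  have h1 : M * N = M * S * S := by rw [Matrix.mul_assoc, hN.sqrt_mul_self]
  rw [h1, Matrix.trace_mul_cycle]
  have : S * M * S = Sᴴ * M * S := by rw [hSherm]
  rw [this]
  exact psd_trace_nonneg (hM.conjTranspose_mul_mul_same S)

lemma frob_of_trace (M : Matrix n n ℂ) :
    ((Mᴴ * M).trace).re = ∑ p : n × n, ‖M p.1 p.2‖ ^ 2 := by
  rw [Matrix.trace, Complex.re_sum, Fintype.sum_prod_type_right]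
  congr 1
  funext j
  rw [Matrix.diag_apply, entry_sum_sq M j, Complex.ofReal_re]

lemma tn_mul_le (X Y : Matrix n n ℂ) :
    traceNorm (X * Y) ≤ Real.sqrt (((Xᴴ * X).trace).re) * Real.sqrt (((Yᴴ * Y).trace).re) := by
  obtain ⟨C, hC1, hC2, hCeq⟩ := exists_opt_contraction (X * Y)
  set M := C * X with hM
  have step1 : traceNorm (X * Y) = ((M * Y).trace).re := by
    rw [← hCeq, hM, Matrix.mul_assoc]
  have step2 : ((M * Y).trace).re ≤
      Real.sqrt (((Mᴴ * M).trace).re) * Real.sqrt (((Yᴴ * Y).trace).re) := by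
    rw [Matrix.trace, Complex.re_sum]
    calc ∑ j, ((M * Y).diag j).re
        ≤ ∑ j, ∑ i, ‖M j i‖ * ‖Y i j‖ := by
          apply Finset.sum_le_sum
          intro j _
          rw [Matrix.diag_apply, Matrix.mul_apply, Complex.re_sum]
          apply Finset.sum_le_sum
          intro i _
          calc (M j i * Y i j).re ≤ ‖M j i * Y i j‖ := Complex.re_le_norm _
            _ = ‖M j i‖ * ‖Y i j‖ := norm_mul _ _
      _ = ∑ p : n × n, ‖M p.1 p.2‖ * ‖Y p.2 p.1‖ := by
          rw [Fintype.sum_prod_type]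
      _ ≤ Real.sqrt (∑ p : n × n, ‖M p.1 p.2‖ ^ 2) *
            Real.sqrt (∑ p : n × n, ‖Y p.2 p.1‖ ^ 2) :=
          Real.sum_mul_le_sqrt_mul_sqrt _ _ _
      _ = Real.sqrt (((Mᴴ * M).trace).re) * Real.sqrt (((Yᴴ * Y).trace).re) := by
          rw [frob_of_trace M, frob_of_trace Y]
          congr 2
          simpa using (Equiv.prodComm n n).sum_comp (fun p : n × n => ‖Y p.1 p.2‖ ^ 2)
  have step3 : ((Mᴴ * M).trace).re ≤ ((Xᴴ * X).trace).re := by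
    have hdiff : Xᴴ * X - Mᴴ * M = Xᴴ * ((1 : Matrix n n ℂ) - Cᴴ * C) * X := by
      rw [hM, Matrix.conjTranspose_mul]
      noncomm_ring
    have hpsd : (Xᴴ * X - Mᴴ * M).PosSemidef := by
      rw [hdiff]; exact hC2.conjTranspose_mul_mul_same X
    have := psd_trace_nonneg hpsd
    rw [Matrix.trace_sub] at this
    have hre := (Complex.le_def.mp this).1
    rw [Complex.zero_re, Complex.sub_re] at hre
    linarith
  calc traceNorm (X * Y) = ((M * Y).trace).re := step1
    _ ≤ _ := step2
    _ ≤ _ := by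
        apply mul_le_mul_of_nonneg_right _ (Real.sqrt_nonneg _)
        exact Real.sqrt_le_sqrt step3

end tn


set_option maxHeartbeats 1600000 in
theorem gentle_measurement' (d : ℕ) (ε : ℝ) (hε0 : 0 ≤ ε) (hε1 : ε ≤ 1)
    (ρ Pi : Matrix (Fin d) (Fin d) ℂ) (hρ : ρ.PosSemidef) (htr : ρ.trace = 1)
    (hPi0 : Pi.PosSemidef) (hPi1 : ((1 : Matrix (Fin d) (Fin d) ℂ) - Pi).PosSemidef)
    (hexp : 1 - ε ≤ ((ρ * Pi).trace).re) :
    traceNorm (ρ - Pi * ρ * Pi) ≤ Real.sqrt (8 * ε) ∧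
    traceNorm (ρ - ((Pi * ρ * Pi).trace)⁻¹ • (Pi * ρ * Pi)) ≤ Real.sqrt (8 * ε) + 2 * ε := by
  set Q : Matrix (Fin d) (Fin d) ℂ := 1 - Pi with hQdef
  have hQ : Q.PosSemidef := hPi1
  set S : Matrix (Fin d) (Fin d) ℂ := hρ.sqrt with hSdef
  have hSS : S * S = ρ := hρ.sqrt_mul_self
  have hSh : Sᴴ = S := hρ.posSemidef_sqrt.1
  -- a := Re Tr(Pi ρ)
  set a : ℝ := ((Pi * ρ).trace).re with hadef
  have ha1 : 1 - ε ≤ a := by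
    rw [hadef, Matrix.trace_mul_comm]
    exact hexp
  -- trace of Q ρ
  have hQρ : ((Q * ρ).trace).re = 1 - a := by
    rw [hQdef, Matrix.sub_mul, Matrix.one_mul, Matrix.trace_sub, Complex.sub_re, htr,
      Complex.one_re]
  have hQρ_nonneg : 0 ≤ ((Q * ρ).trace).re :=
    (Complex.le_def.mp (trace_mul_psd_nonneg hQ hρ)).1.trans_eq' (by simp)
  have ha2 : a ≤ 1 := by linarith [hQρ_nonneg, hQρ.symm.trans_le (le_of_eq rfl)]
  -- Q - Q*Q is PSD
  have hQQ_psd : (Q - Q * Q).PosSemidef := by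
    set T : Matrix (Fin d) (Fin d) ℂ := hQ.sqrt with hT
    have hTT : T * T = Q := hQ.sqrt_mul_self
    have hTh : Tᴴ = T := hQ.posSemidef_sqrt.1
    have key : Q - Q * Q = Tᴴ * Pi * T := by
      rw [hTh]
      have hPiT : Pi = 1 - Q := by rw [hQdef]; abel
      rw [hPiT]
      calc Q - Q * Q = T * T - (T * T) * (T * T) := by rw [hTT]
        _ = T * (1 - T * T) * T := by noncomm_ring
        _ = T * (1 - Q) * T := by rw [hTT]
    rw [key]
    exact hPi0.conjTranspose_mul_mul_same T
  have hPiPi_psd : (Pi - Pi * Pi).PosSemidef := by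
    set T : Matrix (Fin d) (Fin d) ℂ := hPi0.sqrt with hT
    have hTT : T * T = Pi := hPi0.sqrt_mul_self
    have hTh : Tᴴ = T := hPi0.posSemidef_sqrt.1
    have key : Pi - Pi * Pi = Tᴴ * Q * T := by
      rw [hTh, hQdef]
      calc Pi - Pi * Pi = T * T - (T * T) * (T * T) := by rw [hTT]
        _ = T * (1 - T * T) * T := by noncomm_ring
        _ = T * (1 - Pi) * T := by rw [hTT]
    rw [key]
    exact hQ.conjTranspose_mul_mul_same T
  -- Re Tr(Q Q ρ) ≤ ε and ≥ 0
  have hQQρ_le : ((Q * Q * ρ).trace).re ≤ ε := by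
    have h0 : 0 ≤ (((Q - Q * Q) * ρ).trace).re :=
      (Complex.le_def.mp (trace_mul_psd_nonneg hQQ_psd hρ)).1.trans_eq' (by simp)
    have hexpand : (Q - Q * Q) * ρ = Q * ρ - Q * Q * ρ := by noncomm_ring
    rw [hexpand, Matrix.trace_sub, Complex.sub_re] at h0
    linarith [hQρ, ha1]
  have hQQρ_nonneg : 0 ≤ ((Q * Q * ρ).trace).re := by
    have hQ2 : (Q * Q).PosSemidef := by
      have := Matrix.posSemidef_conjTranspose_mul_self Q
      rwa [hQ.1] at this
    exact (Complex.le_def.mp (trace_mul_psd_nonneg hQ2 hρ)).1.trans_eq' (by simp)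
  -- Re Tr(Pi Pi ρ) bounds
  have hPiPiρ_le : ((Pi * Pi * ρ).trace).re ≤ 1 := by
    have h0 : 0 ≤ (((Pi - Pi * Pi) * ρ).trace).re :=
      (Complex.le_def.mp (trace_mul_psd_nonneg hPiPi_psd hρ)).1.trans_eq' (by simp)
    have hexpand : (Pi - Pi * Pi) * ρ = Pi * ρ - Pi * Pi * ρ := by noncomm_ring
    rw [hexpand, Matrix.trace_sub, Complex.sub_re] at h0
    linarith
  have hPiPiρ_ge : 1 - 2 * ε ≤ ((Pi * Pi * ρ).trace).re := by
    have hexpand : Q * Q * ρ = ρ - Pi * ρ - Pi * ρ + Pi * Pi * ρ := by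
      rw [hQdef]; noncomm_ring
    have := hQQρ_nonneg
    rw [hexpand, Matrix.trace_add, Matrix.trace_sub, Matrix.trace_sub, Complex.add_re,
      Complex.sub_re, Complex.sub_re, htr, Complex.one_re] at this
    linarith
  -- sqrt ε bounds on the two pieces
  have hbound1 : traceNorm (Q * ρ) ≤ Real.sqrt ε := by
    have hfact : Q * ρ = (Q * S) * S := by rw [← hSS]; noncomm_ring
    have h := tn_mul_le (Q * S) S
    have e1 : (((Q * S)ᴴ * (Q * S)).trace) = ((Q * Q * ρ).trace) := by
      rw [Matrix.conjTranspose_mul, hSh, hQ.1]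
      calc (S * Q * (Q * S)).trace = (S * (Q * Q * S)).trace := by congr 1; noncomm_ring
        _ = ((Q * Q * S) * S).trace := Matrix.trace_mul_comm _ _
        _ = (Q * Q * ρ).trace := by rw [← hSS]; congr 1; noncomm_ring
    have e2 : ((Sᴴ * S).trace) = 1 := by rw [hSh, hSS, htr]
    rw [e1, e2] at h
    rw [hfact]
    calc traceNorm ((Q * S) * S)
        ≤ Real.sqrt (((Q * Q * ρ).trace).re) * Real.sqrt ((1 : ℂ).re) := h
      _ = Real.sqrt (((Q * Q * ρ).trace).re) := by simp
      _ ≤ Real.sqrt ε := Real.sqrt_le_sqrt hQQρ_le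
  have hbound2 : traceNorm (Pi * ρ * Q) ≤ Real.sqrt ε := by
    have hfact : Pi * ρ * Q = (Pi * S) * (S * Q) := by rw [← hSS]; noncomm_ring
    have h := tn_mul_le (Pi * S) (S * Q)
    have e1 : (((Pi * S)ᴴ * (Pi * S)).trace) = ((Pi * Pi * ρ).trace) := by
      rw [Matrix.conjTranspose_mul, hSh, hPi0.1]
      calc (S * Pi * (Pi * S)).trace = (S * (Pi * Pi * S)).trace := by congr 1; noncomm_ring
        _ = ((Pi * Pi * S) * S).trace := Matrix.trace_mul_comm _ _
        _ = (Pi * Pi * ρ).trace := by rw [← hSS]; congr 1; noncomm_ring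
    have e2 : (((S * Q)ᴴ * (S * Q)).trace) = ((Q * Q * ρ).trace) := by
      rw [Matrix.conjTranspose_mul, hSh, hQ.1]
      calc (Q * S * (S * Q)).trace = (Q * ρ * Q).trace := by
            rw [← hSS]; congr 1; noncomm_ring
        _ = (Q * (Q * ρ)).trace := Matrix.trace_mul_comm _ _
        _ = (Q * Q * ρ).trace := by rw [← Matrix.mul_assoc]
    rw [e1, e2] at h
    rw [hfact]
    calc traceNorm ((Pi * S) * (S * Q))
        ≤ Real.sqrt (((Pi * Pi * ρ).trace).re) * Real.sqrt (((Q * Q * ρ).trace).re) := h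
      _ ≤ 1 * Real.sqrt ε := by
          apply mul_le_mul
          · rw [show (1:ℝ) = Real.sqrt 1 by simp]
            exact Real.sqrt_le_sqrt (by linarith)
          · exact Real.sqrt_le_sqrt hQQρ_le
          · exact Real.sqrt_nonneg _
          · norm_num
      _ = Real.sqrt ε := one_mul _
  -- part 1
  have hdecomp : ρ - Pi * ρ * Pi = Q * ρ + Pi * ρ * Q := by rw [hQdef]; noncomm_ring
  have h2sqrt : 2 * Real.sqrt ε ≤ Real.sqrt (8 * ε) := by
    have h4 : Real.sqrt (4 * ε) = 2 * Real.sqrt ε := by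
      rw [Real.sqrt_mul (by norm_num : (0:ℝ) ≤ 4)]
      congr 1
      rw [show (4:ℝ) = 2 ^ 2 by norm_num, Real.sqrt_sq (by norm_num : (0:ℝ) ≤ 2)]
    rw [← h4]
    exact Real.sqrt_le_sqrt (by linarith)
  have hpart1 : traceNorm (ρ - Pi * ρ * Pi) ≤ Real.sqrt (8 * ε) := by
    rw [hdecomp]
    calc traceNorm (Q * ρ + Pi * ρ * Q) ≤ traceNorm (Q * ρ) + traceNorm (Pi * ρ * Q) :=
          tn_triangle _ _
      _ ≤ Real.sqrt ε + Real.sqrt ε := add_le_add hbound1 hbound2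
      _ = 2 * Real.sqrt ε := by ring
      _ ≤ Real.sqrt (8 * ε) := h2sqrt
  refine ⟨hpart1, ?_⟩
  -- part 2
  have hPRP : (Pi * ρ * Pi).PosSemidef := by
    have := hρ.mul_mul_conjTranspose_same Pi
    rwa [hPi0.1] at this
  set t : ℂ := (Pi * ρ * Pi).trace with htdef
  have ht0 : 0 ≤ t := psd_trace_nonneg hPRP
  set r : ℝ := t.re with hrdef
  have htr2 : t = (r : ℂ) := by
    have him := (Complex.le_def.mp ht0).2
    apply Complex.ext
    · simp [hrdef]
    · simp [← him]
  have hr0 : 0 ≤ r := by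
    have := (Complex.le_def.mp ht0).1
    simpa [hrdef] using this
  have hrval : t = (Pi * Pi * ρ).trace := by
    rw [htdef, Matrix.trace_mul_cycle]
  have hr_le : r ≤ 1 := by
    have hre : r = ((Pi * Pi * ρ).trace).re := by rw [hrdef, hrval]
    rw [hre]
    exact hPiPiρ_le
  have hr_ge : 1 - 2 * ε ≤ r := by
    rw [hrdef, hrval]
    exact hPiPiρ_ge
  have hcoef : ((1 - r⁻¹ : ℝ) : ℂ) = 1 - t⁻¹ := by
    rw [htr2]
    push_cast
    ring
  have hdecomp2 : ρ - t⁻¹ • (Pi * ρ * Pi) =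
      (ρ - Pi * ρ * Pi) + ((1 - r⁻¹ : ℝ) : ℂ) • (Pi * ρ * Pi) := by
    rw [hcoef, sub_smul, one_smul]
    abel
  have htail : traceNorm (((1 - r⁻¹ : ℝ) : ℂ) • (Pi * ρ * Pi)) ≤ 2 * ε := by
    rw [tn_real_smul, tn_psd hPRP, ← htdef, ← hrdef]
    rcases eq_or_lt_of_le hr0 with h | h
    · rw [← h]
      simp
      linarith
    · have hrr : r * r⁻¹ = 1 := mul_inv_cancel₀ (ne_of_gt h)
      have hsign : 1 - r⁻¹ ≤ 0 := by nlinarith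
      rw [abs_of_nonpos hsign, neg_sub, sub_mul, inv_mul_cancel₀ (ne_of_gt h), one_mul]
      linarith
  calc traceNorm (ρ - t⁻¹ • (Pi * ρ * Pi))
      ≤ traceNorm (ρ - Pi * ρ * Pi) +
        traceNorm (((1 - r⁻¹ : ℝ) : ℂ) • (Pi * ρ * Pi)) := by
        rw [hdecomp2]
        exact tn_triangle _ _
    _ ≤ Real.sqrt (8 * ε) + 2 * ε := add_le_add hpart1 htail

/-- gentle measurement / tender operator lemma: If `ρ` is a density
operator and `0 ≤ Π ≤ 𝟙` satisfies `Tr(ρΠ) ≥ 1 − ε` for `ε ∈ [0,1]`, then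
`‖ρ − ΠρΠ‖₁ ≤ √(8ε)`, and hence also `‖ρ − ΠρΠ/Tr(ΠρΠ)‖₁ ≤ √(8ε) + 2ε`. -/
theorem gentle_measurement (d : ℕ) (ε : ℝ) (hε0 : 0 ≤ ε) (hε1 : ε ≤ 1)
    (ρ Pi : Matrix (Fin d) (Fin d) ℂ) (hρ : ρ.PosSemidef) (htr : ρ.trace = 1)
    (hPi0 : Pi.PosSemidef) (hPi1 : ((1 : Matrix (Fin d) (Fin d) ℂ) - Pi).PosSemidef)
    (hexp : 1 - ε ≤ ((ρ * Pi).trace).re) :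
    traceNorm (ρ - Pi * ρ * Pi) ≤ Real.sqrt (8 * ε) ∧
    traceNorm (ρ - ((Pi * ρ * Pi).trace)⁻¹ • (Pi * ρ * Pi)) ≤ Real.sqrt (8 * ε) + 2 * ε :=
  gentle_measurement' d ε hε0 hε1 ρ Pi hρ htr hPi0 hPi1 hexp
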